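/- arXiv:0910.0935 — 9 statements merged into one kernel-verified Lean document; each statement's English description precedes it below -/
import Mathlib

section
/- The explicit inverse of the Ka-transformation: define for w ∈ ℝ^N with w ≠ 0 the map Y(w) = ρ(w)·[ (⟨w,b⟩ − (g/(2h))·‖w − ⟨w,b⟩·b‖)·b + (1/h)·(w − ⟨w,b⟩·b) ], where ρ(w) = ‖w‖^{(1−h)/h}·exp( (g/2)·(1/h)·arccos(⟨w,b⟩/‖w‖) ). Then Y(ζ(y)) = y for every y ∈ ℝ^N with y ≠ 0. -/
noncomputable section

open Real
open scoped RealInnerProductSpace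

/-- The parameter `h = sqrt(1 - g^2/4)`. -/
def hpar (g : ℝ) : ℝ := Real.sqrt (1 - g ^ 2 / 4)

variable {N : ℕ}

/-- `v(y) = y - ⟨b,y⟩ b`, the part of `y` orthogonal to the unit axis vector `b`. -/
def vv (b y : EuclideanSpace ℝ (Fin N)) : EuclideanSpace ℝ (Fin N) := y - (inner ℝ b y : ℝ) • b

/-- `q(y) = ‖v(y)‖`. -/
def qq (b y : EuclideanSpace ℝ (Fin N)) : ℝ := ‖vv b y‖

/-- `A(y) = ⟨b,y⟩ + (g/2) q(y)`. -/
def AA (g : ℝ) (b y : EuclideanSpace ℝ (Fin N)) : ℝ := (inner ℝ b y : ℝ) + g / 2 * qq b y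

/-- `B(y) = ⟨b,y⟩² + g ⟨b,y⟩ q(y) + q(y)²`. -/
def BB (g : ℝ) (b y : EuclideanSpace ℝ (Fin N)) : ℝ :=
  (inner ℝ b y : ℝ) ^ 2 + g * (inner ℝ b y : ℝ) * qq b y + qq b y ^ 2

/-- The azimuthal angle `χ(y) = (1/h) arccos (A(y)/√B(y))`. -/
def chi (g : ℝ) (b y : EuclideanSpace ℝ (Fin N)) : ℝ :=
  1 / hpar g * Real.arccos (AA g b y / Real.sqrt (BB g b y))

/-- `J(y) = exp(-(g/2) χ(y))`. -/
def JJ (g : ℝ) (b y : EuclideanSpace ℝ (Fin N)) : ℝ := Real.exp (-(g / 2) * chi g b y)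

/-- The Finsleroid metric function `K(y) = √B(y) · J(y)`. -/
def KK (g : ℝ) (b y : EuclideanSpace ℝ (Fin N)) : ℝ := Real.sqrt (BB g b y) * JJ g b y

/-- The Ka-transformation `ζ(y) = (K(y)^h/√B(y)) (h v(y) + A(y) b)`. -/
def zeta (g : ℝ) (b y : EuclideanSpace ℝ (Fin N)) : EuclideanSpace ℝ (Fin N) :=
  (KK g b y ^ hpar g / Real.sqrt (BB g b y)) • (hpar g • vv b y + AA g b y • b)

/-- The explicit inverse map `Y` of the Ka-transformation. -/
def Yinv (g : ℝ) (b w : EuclideanSpace ℝ (Fin N)) : EuclideanSpace ℝ (Fin N) :=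
  (‖w‖ ^ ((1 - hpar g) / hpar g) *
      Real.exp (g / 2 * (1 / hpar g) * Real.arccos ((inner ℝ w b : ℝ) / ‖w‖))) •
    (((inner ℝ w b : ℝ) - g / (2 * hpar g) * ‖w - (inner ℝ w b : ℝ) • b‖) • b
      + (1 / hpar g) • (w - (inner ℝ w b : ℝ) • b))

set_option maxHeartbeats 1000000 in
theorem stmt5 (N : ℕ) (hN : 2 ≤ N) (g : ℝ) (hg1 : -2 < g) (hg2 : g < 2)
    (b : EuclideanSpace ℝ (Fin N)) (hb : ‖b‖ = 1)
    (y : EuclideanSpace ℝ (Fin N)) (hy : y ≠ 0) :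
    Yinv g b (zeta g b y) = y := by
  have hgg : (0:ℝ) < 1 - g ^ 2 / 4 := by nlinarith
  have hhpos : 0 < hpar g := Real.sqrt_pos.mpr hgg
  have hh2 : hpar g ^ 2 = 1 - g ^ 2 / 4 := Real.sq_sqrt hgg.le
  set h : ℝ := hpar g with hhdef
  have hhne : h ≠ 0 := ne_of_gt hhpos
  set t : ℝ := (inner ℝ b y : ℝ) with ht
  set v : EuclideanSpace ℝ (Fin N) := vv b y with hv
  set q : ℝ := qq b y with hq
  set A : ℝ := AA g b y with hA
  have hA' : A = t + g / 2 * q := rfl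
  have hqv : q = ‖v‖ := rfl
  have hq0 : 0 ≤ q := by rw [hqv]; exact norm_nonneg _
  have hbb : (inner ℝ b b : ℝ) = 1 := by
    rw [real_inner_self_eq_norm_sq, hb]; norm_num
  have hbv : (inner ℝ b v : ℝ) = 0 := by
    simp only [hv, vv, inner_sub_right, real_inner_smul_right, hbb, ← ht]
    ring
  have hvb : (inner ℝ v b : ℝ) = 0 := by rw [real_inner_comm]; exact hbv
  have hyv : y = v + t • b := by
    simp only [hv, vv, ← ht]
    abel
  set B : ℝ := BB g b y with hBdef
  have hB : B = A ^ 2 + h ^ 2 * q ^ 2 := by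
    rw [hBdef, BB, hA', ← hq, ← ht]
    linear_combination (-q ^ 2) * hh2
  have hBpos : 0 < B := by
    rcases eq_or_lt_of_le hq0 with hq' | hq'
    · have hv0 : v = 0 := by
        rw [← norm_eq_zero, ← hqv, ← hq']
      have ht0 : t ≠ 0 := by
        intro h0
        exact hy (by rw [hyv, hv0, h0, zero_smul, zero_add])
      have : B = t ^ 2 := by rw [hB, hA', ← hq']; ring
      rw [this]
      positivity
    · rw [hB]
      nlinarith [sq_nonneg A, mul_pos hhpos hhpos, mul_pos hq' hq']
  set S : ℝ := Real.sqrt B with hSdef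
  have hSpos : 0 < S := Real.sqrt_pos.mpr hBpos
  have hS2 : S ^ 2 = B := Real.sq_sqrt hBpos.le
  set x : ℝ := chi g b y with hx
  have hhx : h * x = Real.arccos (A / S) := by
    rw [hx, chi, ← hhdef, ← hA, ← hBdef, ← hSdef]
    field_simp
  set K : ℝ := KK g b y with hK
  have hKval : K = S * Real.exp (-(g / 2) * x) := by
    rw [hK, KK, JJ, ← hx, ← hBdef, ← hSdef]
  have hKpos : 0 < K := by rw [hKval]; positivity
  set c : ℝ := K ^ h / S with hc
  have hcpos : 0 < c := div_pos (Real.rpow_pos_of_pos hKpos _) hSpos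
  have hzeta : zeta g b y = c • (h • v + A • b) := by
    rw [zeta, ← hhdef, ← hK, ← hBdef, ← hSdef, ← hv, ← hA, ← hc]
  have hwb : (inner ℝ (zeta g b y) b : ℝ) = c * A := by
    rw [hzeta]
    simp only [real_inner_smul_left, inner_add_left, hvb, hbb]
    ring
  have hwperp : zeta g b y - (inner ℝ (zeta g b y) b : ℝ) • b = (c * h) • v := by
    rw [hwb, hzeta]
    module
  have hnv : ‖(c * h) • v‖ = c * h * q := by
    rw [norm_smul, Real.norm_eq_abs, abs_of_pos (mul_pos hcpos hhpos), hqv]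
  have hwnorm : ‖zeta g b y‖ = c * S := by
    have hzw : zeta g b y = (c * h) • v + (c * A) • b := by rw [hzeta]; module
    have h1 : ‖zeta g b y‖ ^ 2 = (c * S) ^ 2 := by
      rw [hzw, norm_add_sq_real, real_inner_smul_left, real_inner_smul_right, hvb]
      rw [norm_smul, norm_smul, hb, Real.norm_eq_abs, Real.norm_eq_abs, ← hqv]
      have e1 : (|c * h| * q) ^ 2 = (c * h) ^ 2 * q ^ 2 := by
        rw [mul_pow, sq_abs]
      have e2 : (|c * A| * 1) ^ 2 = (c * A) ^ 2 := by
        rw [mul_one, sq_abs]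
      rw [e1, e2]
      linear_combination (-c ^ 2) * hS2 + (-c ^ 2) * hB
    rw [← Real.sqrt_sq (norm_nonneg _), h1, Real.sqrt_sq (by positivity)]
  have hcS : c * S = K ^ h := by
    rw [hc]; field_simp
  rw [Yinv, ← hhdef, hwperp, hwb, hnv, hwnorm,
    mul_div_mul_left _ _ (ne_of_gt hcpos), hcS, ← hhx]
  have hr1 : (K ^ h) ^ ((1 - h) / h) = K ^ (1 - h) := by
    rw [← Real.rpow_mul hKpos.le]
    congr 1
    field_simp
  have hexp : g / 2 * (1 / h) * (h * x) = g / 2 * x := by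
    field_simp
  have hsb : c * A - g / (2 * h) * (c * h * q) = c * t := by
    rw [hA']
    field_simp
    ring
  have hsv : (1 / h) • ((c * h) • v) = c • v := by
    rw [smul_smul]
    congr 1
    field_simp
  rw [hr1, hexp, hsb, hsv]
  have hvec : (c * t) • b + c • v = c • y := by
    rw [hyv]; module
  rw [hvec, smul_smul]
  have hKK : K ^ (1 - h) * K ^ h = K := by
    rw [← Real.rpow_add hKpos]
    have e : 1 - h + h = 1 := by ring
    rw [e, Real.rpow_one]
  have hrc : K ^ (1 - h) * Real.exp (g / 2 * x) * c = 1 := by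
    calc K ^ (1 - h) * Real.exp (g / 2 * x) * c
        = (K ^ (1 - h) * K ^ h) * Real.exp (g / 2 * x) / S := by rw [hc]; ring
      _ = K * Real.exp (g / 2 * x) / S := by rw [hKK]
      _ = S * (Real.exp (-(g / 2) * x) * Real.exp (g / 2 * x)) / S := by
          rw [hKval]; ring
      _ = 1 := by
          rw [← Real.exp_add]
          have e : -(g / 2) * x + g / 2 * x = 0 := by ring
          rw [e, Real.exp_zero, mul_one, div_self (ne_of_gt hSpos)]
  rw [hrc, one_smul]
end
end

section
/- The FF^PD_g two-vector cosine formula: for all y₁, y₂ ∈ ℝ^N with y₁ ≠ 0 and y₂ ≠ 0, ⟨ζ(y₁), ζ(y₂)⟩ = K(y₁)^h·K(y₂)^h·( A(y₁)·A(y₂) + h²·⟨v(y₁), v(y₂)⟩ ) / ( √B(y₁)·√B(y₂) ). In particular the Finsleroid angle α(y₁,y₂) = (1/h)·arccos( ⟨ζ(y₁),ζ(y₂)⟩ / (‖ζ(y₁)‖·‖ζ(y₂)‖) ) equals (1/h)·arccos( (A(y₁)A(y₂) + h²⟨v(y₁),v(y₂)⟩) / (√B(y₁)·√B(y₂)) ).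 -/
noncomputable section

open Real
open scoped RealInnerProductSpace

variable {N : ℕ}

lemma hpar_pos {g : ℝ} (hg1 : -2 < g) (hg2 : g < 2) : 0 < hpar g := by
  apply Real.sqrt_pos.mpr; nlinarith

lemma hpar_sq {g : ℝ} (hg1 : -2 < g) (hg2 : g < 2) : hpar g ^ 2 = 1 - g ^ 2 / 4 := by
  rw [hpar, sq_sqrt]; nlinarith

lemma inner_b_vv (b y : EuclideanSpace ℝ (Fin N)) (hb : ‖b‖ = 1) :
    (inner ℝ b (vv b y) : ℝ) = 0 := by
  rw [vv, inner_sub_right, real_inner_smul_right, real_inner_self_eq_norm_sq, hb]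
  ring

lemma BB_pos {g : ℝ} (hg1 : -2 < g) (hg2 : g < 2) (b : EuclideanSpace ℝ (Fin N))
    (y : EuclideanSpace ℝ (Fin N)) (hy : y ≠ 0) : 0 < BB g b y := by
  have hsq := hpar_sq hg1 hg2
  have hh := hpar_pos hg1 hg2
  have hBeq : BB g b y = AA g b y ^ 2 + hpar g ^ 2 * qq b y ^ 2 := by
    rw [BB, AA, hsq]; ring
  rcases eq_or_ne (qq b y) 0 with hq | hq
  · have hv : vv b y = 0 := by simpa [qq] using hq
    have hby : (inner ℝ b y : ℝ) ≠ 0 := by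
      intro h0
      apply hy
      have h2 := hv
      rw [vv, h0, zero_smul, sub_zero] at h2
      exact h2
    have hA : AA g b y ≠ 0 := by
      rw [AA, hq]
      simpa using hby
    have hA2 : 0 < AA g b y ^ 2 :=
      lt_of_le_of_ne (sq_nonneg _) (Ne.symm (pow_ne_zero 2 hA))
    rw [hBeq]
    nlinarith [sq_nonneg (qq b y)]
  · have : 0 < qq b y := lt_of_le_of_ne (norm_nonneg _) (Ne.symm hq)
    rw [hBeq]
    nlinarith [sq_nonneg (AA g b y), mul_pos (pow_pos hh 2) (pow_pos this 2)]

lemma inner_expand {g : ℝ} (hg1 : -2 < g) (hg2 : g < 2) (b : EuclideanSpace ℝ (Fin N))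
    (hb : ‖b‖ = 1) (y₁ y₂ : EuclideanSpace ℝ (Fin N)) :
    (inner ℝ (zeta g b y₁) (zeta g b y₂) : ℝ) =
      (KK g b y₁ ^ hpar g / Real.sqrt (BB g b y₁)) *
      (KK g b y₂ ^ hpar g / Real.sqrt (BB g b y₂)) *
      (AA g b y₁ * AA g b y₂ + hpar g ^ 2 * (inner ℝ (vv b y₁) (vv b y₂) : ℝ)) := by
  have h1 : (inner ℝ b (vv b y₂) : ℝ) = 0 := inner_b_vv b y₂ hb
  have h2 : (inner ℝ (vv b y₁) b : ℝ) = 0 := by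
    rw [real_inner_comm]; exact inner_b_vv b y₁ hb
  have hbb : (inner ℝ b b : ℝ) = 1 := by
    rw [real_inner_self_eq_norm_sq, hb]; norm_num
  rw [zeta, zeta]
  simp only [real_inner_smul_left, real_inner_smul_right, inner_add_left, inner_add_right,
    h1, h2, hbb]
  ring

lemma norm_zeta {g : ℝ} (hg1 : -2 < g) (hg2 : g < 2) (b : EuclideanSpace ℝ (Fin N))
    (hb : ‖b‖ = 1) (y : EuclideanSpace ℝ (Fin N)) (hy : y ≠ 0) :
    ‖zeta g b y‖ = KK g b y ^ hpar g := by
  have hB := BB_pos hg1 hg2 b y hy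
  have hsB : 0 < Real.sqrt (BB g b y) := Real.sqrt_pos.mpr hB
  have h1 : (inner ℝ b (vv b y) : ℝ) = 0 := inner_b_vv b y hb
  have h2 : (inner ℝ (vv b y) b : ℝ) = 0 := by rw [real_inner_comm]; exact h1
  have hbb : (inner ℝ b b : ℝ) = 1 := by rw [real_inner_self_eq_norm_sq, hb]; norm_num
  have hKpos : 0 < KK g b y ^ hpar g :=
    Real.rpow_pos_of_pos (mul_pos hsB (Real.exp_pos _)) _
  have hn2 : ‖hpar g • vv b y + AA g b y • b‖ ^ 2 = BB g b y := by
    rw [← real_inner_self_eq_norm_sq]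
    simp only [real_inner_smul_left, real_inner_smul_right, inner_add_left, inner_add_right,
      h1, h2, hbb]
    rw [real_inner_self_eq_norm_sq]
    have : ‖vv b y‖ ^ 2 = qq b y ^ 2 := by rw [qq]
    rw [this, BB, AA]
    linear_combination qq b y ^ 2 * hpar_sq hg1 hg2
  have hn : ‖hpar g • vv b y + AA g b y • b‖ = Real.sqrt (BB g b y) := by
    rw [← hn2, Real.sqrt_sq (norm_nonneg _)]
  rw [zeta, norm_smul, hn, Real.norm_eq_abs,
    abs_of_pos (div_pos hKpos hsB), div_mul_cancel₀]
  exact ne_of_gt hsB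

theorem stmt7 (N : ℕ) (hN : 2 ≤ N) (g : ℝ) (hg1 : -2 < g) (hg2 : g < 2)
    (b : EuclideanSpace ℝ (Fin N)) (hb : ‖b‖ = 1)
    (y₁ y₂ : EuclideanSpace ℝ (Fin N)) (hy₁ : y₁ ≠ 0) (hy₂ : y₂ ≠ 0) :
    (inner ℝ (zeta g b y₁) (zeta g b y₂) : ℝ) =
      KK g b y₁ ^ hpar g * KK g b y₂ ^ hpar g *
        (AA g b y₁ * AA g b y₂ + hpar g ^ 2 * (inner ℝ (vv b y₁) (vv b y₂) : ℝ)) /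
          (Real.sqrt (BB g b y₁) * Real.sqrt (BB g b y₂)) ∧
    1 / hpar g *
        Real.arccos ((inner ℝ (zeta g b y₁) (zeta g b y₂) : ℝ) / (‖zeta g b y₁‖ * ‖zeta g b y₂‖)) =
      1 / hpar g *
        Real.arccos ((AA g b y₁ * AA g b y₂ + hpar g ^ 2 * (inner ℝ (vv b y₁) (vv b y₂) : ℝ)) /
          (Real.sqrt (BB g b y₁) * Real.sqrt (BB g b y₂))) := by
  have hs1 : 0 < Real.sqrt (BB g b y₁) := Real.sqrt_pos.mpr (BB_pos hg1 hg2 b y₁ hy₁)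
  have hs2 : 0 < Real.sqrt (BB g b y₂) := Real.sqrt_pos.mpr (BB_pos hg1 hg2 b y₂ hy₂)
  have hK1 : 0 < KK g b y₁ ^ hpar g := by
    apply Real.rpow_pos_of_pos
    rw [KK, JJ]
    exact mul_pos hs1 (Real.exp_pos _)
  have hK2 : 0 < KK g b y₂ ^ hpar g := by
    apply Real.rpow_pos_of_pos
    rw [KK, JJ]
    exact mul_pos hs2 (Real.exp_pos _)
  have e := inner_expand hg1 hg2 b hb y₁ y₂
  constructor
  · rw [e]; field_simp
  · congr 2
    rw [e, norm_zeta hg1 hg2 b hb y₁ hy₁, norm_zeta hg1 hg2 b hb y₂ hy₂]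
    field_simp
end
end

section
/- The Finsleroid angle of a vector with the axis equals the azimuthal coordinate χ: for every y ∈ ℝ^N with y ≠ 0, ⟨ζ(y), b⟩ = K(y)^h·A(y)/√B(y), and hence (1/h)·arccos( ⟨ζ(y), b⟩ / ‖ζ(y)‖ ) = χ(y). -/
noncomputable section

open Real
open scoped RealInnerProductSpace

variable {N : ℕ}

theorem stmt8 (N : ℕ) (hN : 2 ≤ N) (g : ℝ) (hg1 : -2 < g) (hg2 : g < 2)
    (b : EuclideanSpace ℝ (Fin N)) (hb : ‖b‖ = 1)
    (y : EuclideanSpace ℝ (Fin N)) (hy : y ≠ 0) :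
    (inner ℝ (zeta g b y) b : ℝ) = KK g b y ^ hpar g * AA g b y / Real.sqrt (BB g b y) ∧
    1 / hpar g * Real.arccos ((inner ℝ (zeta g b y) b : ℝ) / ‖zeta g b y‖) = chi g b y := by
  have hbb : (inner ℝ b b : ℝ) = 1 := by
    rw [real_inner_self_eq_norm_sq, hb]; norm_num
  have hvb : (inner ℝ (vv b y) b : ℝ) = 0 := by
    simp [vv, inner_sub_left, inner_smul_left, hbb, real_inner_comm b y, hb]
  have hg4 : (0:ℝ) < 1 - g ^ 2 / 4 := by nlinarith
  have hh : 0 < hpar g := Real.sqrt_pos.mpr hg4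
  have hh2 : hpar g ^ 2 = 1 - g ^ 2 / 4 := Real.sq_sqrt hg4.le
  have hq0 : 0 ≤ qq b y := norm_nonneg _
  have hBeq : BB g b y = AA g b y ^ 2 + hpar g ^ 2 * qq b y ^ 2 := by
    simp only [AA, BB, hh2]; ring
  have hB : 0 < BB g b y := by
    rcases eq_or_lt_of_le hq0 with h0 | h0
    · have hv0 : vv b y = 0 := norm_eq_zero.mp h0.symm
      have hyb : y = (inner ℝ b y : ℝ) • b := by
        have := hv0; rw [vv, sub_eq_zero] at this; exact this
      have ht : (inner ℝ b y : ℝ) ≠ 0 := by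
        intro h; apply hy; rw [hyb, h, zero_smul]
      have : BB g b y = (inner ℝ b y : ℝ) ^ 2 := by simp [BB, ← h0]
      rw [this]; positivity
    · rw [hBeq]; nlinarith [sq_nonneg (AA g b y), mul_pos (pow_pos hh 2) (pow_pos h0 2)]
  have hsB : 0 < Real.sqrt (BB g b y) := Real.sqrt_pos.mpr hB
  have hK : 0 < KK g b y := mul_pos hsB (Real.exp_pos _)
  have hKh : 0 < KK g b y ^ hpar g := Real.rpow_pos_of_pos hK _
  have hc : 0 < KK g b y ^ hpar g / Real.sqrt (BB g b y) := div_pos hKh hsB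
  -- first part
  have h1 : (inner ℝ (zeta g b y) b : ℝ) =
      KK g b y ^ hpar g * AA g b y / Real.sqrt (BB g b y) := by
    simp only [zeta, inner_smul_left, inner_add_left, inner_smul_left, hvb, hbb,
      RCLike.conj_to_real]
    ring
  refine ⟨h1, ?_⟩
  -- norm of the inner vector
  have hw : ‖hpar g • vv b y + AA g b y • b‖ ^ 2 = BB g b y := by
    rw [norm_add_sq_real]
    have : (inner ℝ (hpar g • vv b y) (AA g b y • b) : ℝ) = 0 := by
      rw [inner_smul_left, inner_smul_right, hvb]; ring
    rw [this]
    simp only [norm_smul, Real.norm_eq_abs, hb, mul_one]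
    rw [abs_of_pos hh, hBeq]
    have : ‖vv b y‖ = qq b y := rfl
    rw [this, sq_abs]; ring
  have hwn : ‖hpar g • vv b y + AA g b y • b‖ = Real.sqrt (BB g b y) := by
    rw [← hw, Real.sqrt_sq (norm_nonneg _)]
  have hnz : ‖zeta g b y‖ = KK g b y ^ hpar g := by
    rw [zeta, norm_smul, Real.norm_eq_abs, abs_of_pos hc, hwn]
    field_simp
  rw [h1, hnz, chi]
  congr 2
  rw [mul_div_assoc, mul_comm, mul_div_assoc, div_self hKh.ne', mul_one]
end
end

section
/- The Finsleroid angle between the opposed unit axis vectors equals π/h: with b⁻ = −exp(gπ/2)·b, one has (1/h)·arccos( ⟨ζ(b⁻), ζ(b)⟩ / (‖ζ(b⁻)‖·‖ζ(b)‖) ) = π/h; in particular this angle is strictly greater than π whenever g ≠ 0. -/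
noncomputable section

open Real
open scoped RealInnerProductSpace

variable {N : ℕ}

theorem stmt9 (N : ℕ) (hN : 2 ≤ N) (g : ℝ) (hg1 : -2 < g) (hg2 : g < 2)
    (b : EuclideanSpace ℝ (Fin N)) (hb : ‖b‖ = 1) :
    1 / hpar g *
        Real.arccos ((inner ℝ (zeta g b (-Real.exp (g * Real.pi / 2) • b)) (zeta g b b) : ℝ) /
          (‖zeta g b (-Real.exp (g * Real.pi / 2) • b)‖ * ‖zeta g b b‖)) =
      Real.pi / hpar g ∧
    (g ≠ 0 → Real.pi < Real.pi / hpar g) := by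
  have hh2 : (0:ℝ) < 1 - g ^ 2 / 4 := by nlinarith
  have hh : 0 < hpar g := Real.sqrt_pos.mpr hh2
  have hb2 : (inner ℝ b b : ℝ) = 1 := by
    rw [real_inner_self_eq_norm_sq, hb]; norm_num
  set c := Real.exp (g * Real.pi / 2) with hc
  have hcpos : 0 < c := Real.exp_pos _
  -- y = b
  have hv1 : vv b b = 0 := by simp [vv, hb2, hb]
  have hq1 : qq b b = 0 := by simp [qq, hv1]
  have hA1 : AA g b b = 1 := by simp [AA, hb2, hq1, hb]
  have hB1 : BB g b b = 1 := by simp [BB, hb2, hq1, hb]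
  have hchi1 : chi g b b = 0 := by simp [chi, hA1, hB1, Real.arccos_one]
  have hK1 : KK g b b = 1 := by simp [KK, JJ, hB1, hchi1]
  have hz1 : zeta g b b = b := by
    simp [zeta, hK1, hB1, hA1, hv1, Real.one_rpow]
  -- y = -c • b
  have hib : (inner ℝ b ((-c) • b) : ℝ) = -c := by
    rw [real_inner_smul_right, hb2]; ring
  have hv2 : vv b ((-c) • b) = 0 := by
    simp only [vv, hib]
    simp
  have hq2 : qq b ((-c) • b) = 0 := by simp only [qq, hv2, norm_zero]
  have hA2 : AA g b ((-c) • b) = -c := by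
    simp only [AA, hib, hq2]; ring
  have hB2 : BB g b ((-c) • b) = c ^ 2 := by
    simp only [BB, hib, hq2]; ring
  have hsB2 : Real.sqrt (BB g b ((-c) • b)) = c := by
    rw [hB2, Real.sqrt_sq hcpos.le]
  have hchi2 : chi g b ((-c) • b) = Real.pi / hpar g := by
    rw [chi, hA2, hsB2, neg_div, div_self hcpos.ne', Real.arccos_neg_one]
    ring
  set K := KK g b ((-c) • b) with hKdef
  have hKpos : 0 < K := by
    rw [hKdef, KK, hsB2]
    exact mul_pos hcpos (Real.exp_pos _)
  have hKh : (0:ℝ) < K ^ hpar g := Real.rpow_pos_of_pos hKpos _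
  have hz2 : zeta g b ((-c) • b) = (-(K ^ hpar g)) • b := by
    rw [zeta, hv2, hA2, hsB2, ← hKdef]
    rw [smul_zero, zero_add, smul_smul]
    congr 1
    field_simp
  have hnegc : -c • b = (-c) • b := by simp
  rw [hnegc, hz1, hz2]
  constructor
  · have hi : (inner ℝ ((-(K ^ hpar g)) • b) b : ℝ) = -(K ^ hpar g) := by
      rw [real_inner_smul_left, hb2, mul_one]
    have hn : ‖(-(K ^ hpar g)) • b‖ = K ^ hpar g := by
      rw [norm_smul, hb, mul_one, norm_neg, Real.norm_of_nonneg hKh.le]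
    rw [hi, hn, hb, mul_one, neg_div, div_self hKh.ne', Real.arccos_neg_one]
    ring
  · intro hg0
    have h1 : hpar g < 1 := by
      rw [hpar]
      have := Real.sqrt_lt_sqrt hh2.le (show 1 - g ^ 2 / 4 < 1 by nlinarith [sq_pos_of_ne_zero hg0])
      simpa using this
    calc Real.pi = Real.pi / 1 := by ring
      _ < Real.pi / hpar g := by
        apply div_lt_div_of_pos_left Real.pi_pos hh h1
end
end

section
/- The covariant tangent vector of the FF^PD_g metric: for every y ∈ ℝ^N with q(y) > 0, the function y ↦ K(y)²/2 is differentiable at y and its gradient equals (K(y)²/B(y))·( y + g·q(y)·b ); equivalently, its Fréchet derivative sends each tangent vector w to (K(y)²/B(y))·( ⟨y, w⟩ + g·q(y)·⟨b, w⟩ ). -/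
set_option maxHeartbeats 1000000

noncomputable section

open Real
open scoped RealInnerProductSpace

variable {N : ℕ}

/-- auxiliary: derivative of `q`. -/
lemma hasFDerivAt_qq_aux (N : ℕ) (b : EuclideanSpace ℝ (Fin N)) (hb : ‖b‖ = 1)
    (y : EuclideanSpace ℝ (Fin N)) (hq : 0 < qq b y) :
    HasFDerivAt (fun z => qq b z) ((qq b y)⁻¹ • innerSL ℝ (vv b y)) y := by
  set Dv : EuclideanSpace ℝ (Fin N) →L[ℝ] EuclideanSpace ℝ (Fin N) :=
    ContinuousLinearMap.id ℝ _ - (innerSL ℝ b).smulRight b with hDv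
  have hv : HasFDerivAt (fun z => vv b z) Dv y := by
    have : (fun z => vv b z) = fun z => Dv z := by
      funext z
      simp only [hDv, vv, ContinuousLinearMap.sub_apply, ContinuousLinearMap.id_apply,
        ContinuousLinearMap.smulRight_apply, innerSL_apply_apply]
    rw [this]; exact Dv.hasFDerivAt
  have hvb : (inner ℝ (vv b y) b : ℝ) = 0 := by
    simp only [vv, inner_sub_left, real_inner_smul_left]
    rw [real_inner_self_eq_norm_sq, hb, real_inner_comm]; ring
  have hq2 : HasFDerivAt (fun z => ‖vv b z‖ ^ 2)
      (2 • (innerSL ℝ (vv b y)).comp Dv) y := hv.norm_sq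
  have hq0 : (‖vv b y‖ : ℝ) ^ 2 ≠ 0 := by
    have : qq b y ≠ 0 := ne_of_gt hq
    simpa [qq] using pow_ne_zero 2 this
  have hqs : HasFDerivAt (fun z => qq b z)
      ((1 / (2 * Real.sqrt (‖vv b y‖ ^ 2))) • (2 • (innerSL ℝ (vv b y)).comp Dv)) y := by
    have heq : (fun z => qq b z) = fun z => Real.sqrt (‖vv b z‖ ^ 2) := by
      funext z; rw [Real.sqrt_sq (norm_nonneg _)]; rfl
    rw [heq]
    exact hq2.sqrt hq0
  refine hqs.congr_fderiv (Eq.symm ?_)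
  rw [Real.sqrt_sq (norm_nonneg _)]
  ext w
  have hvd : (inner ℝ (vv b y) (Dv w) : ℝ) = inner ℝ (vv b y) w := by
    simp only [hDv, ContinuousLinearMap.sub_apply, ContinuousLinearMap.id_apply,
      ContinuousLinearMap.smulRight_apply, innerSL_apply_apply, inner_sub_right,
      real_inner_smul_right]
    rw [hvb]; ring
  simp only [ContinuousLinearMap.smul_apply, ContinuousLinearMap.comp_apply,
    innerSL_apply_apply, smul_eq_mul, two_smul, ContinuousLinearMap.add_apply]
  rw [hvd]
  have hq' : ‖vv b y‖ ≠ 0 := by simpa [qq] using ne_of_gt hq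
  show (qq b y)⁻¹ * inner ℝ (vv b y) w = _
  unfold qq
  field_simp
  ring

theorem stmt10 (N : ℕ) (hN : 2 ≤ N) (g : ℝ) (hg1 : -2 < g) (hg2 : g < 2)
    (b : EuclideanSpace ℝ (Fin N)) (hb : ‖b‖ = 1)
    (y : EuclideanSpace ℝ (Fin N)) (hq : 0 < qq b y) :
    HasGradientAt (fun z => KK g b z ^ 2 / 2)
      ((KK g b y ^ 2 / BB g b y) • (y + (g * qq b y) • b)) y ∧
    HasFDerivAt (fun z => KK g b z ^ 2 / 2)
      ((KK g b y ^ 2 / BB g b y) • (innerSL ℝ y + (g * qq b y) • innerSL ℝ b)) y := by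
  have hq0 : qq b y ≠ 0 := ne_of_gt hq
  have hgsq : (0:ℝ) < 1 - g ^ 2 / 4 := by nlinarith
  have hh : 0 < hpar g := Real.sqrt_pos.2 hgsq
  have hh2 : hpar g ^ 2 = 1 - g ^ 2 / 4 := Real.sq_sqrt hgsq.le
  have hBA : BB g b y = AA g b y ^ 2 + hpar g ^ 2 * qq b y ^ 2 := by
    rw [hh2]; unfold AA BB; ring
  have hB : 0 < BB g b y := by
    nlinarith [sq_nonneg (AA g b y), mul_pos (pow_pos hh 2) (pow_pos hq 2), hBA]
  have hs : 0 < Real.sqrt (BB g b y) := Real.sqrt_pos.2 hB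
  have hs2 : Real.sqrt (BB g b y) ^ 2 = BB g b y := Real.sq_sqrt hB.le
  set t : ℝ := (inner ℝ b y : ℝ) with htdef
  set q : ℝ := qq b y with hqdef
  set A : ℝ := AA g b y with hAdef
  set B : ℝ := BB g b y with hBdef
  set s : ℝ := Real.sqrt B with hsdef
  set h : ℝ := hpar g with hhdef
  have hAtq : A = t + g / 2 * q := rfl
  have hBtq : B = t ^ 2 + g * t * q + q ^ 2 := rfl
  -- facts about u = A / s
  have hu2 : 1 - (A / s) ^ 2 = h ^ 2 * q ^ 2 / B := by
    rw [div_pow, hs2]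
    field_simp
    linarith [hBA]
  have hu2pos : (0:ℝ) < 1 - (A / s) ^ 2 := by
    rw [hu2]; positivity
  have hune1 : A / s ≠ 1 := by
    intro hc; rw [hc] at hu2pos; norm_num at hu2pos
  have hunem1 : A / s ≠ -1 := by
    intro hc; rw [hc] at hu2pos; norm_num at hu2pos
  have hsqrtu : Real.sqrt (1 - (A / s) ^ 2) = h * q / s := by
    rw [hu2, show h ^ 2 * q ^ 2 / B = (h * q / s) ^ 2 by rw [div_pow, hs2]; ring]
    exact Real.sqrt_sq (by positivity)
  -- derivatives
  set Dt : EuclideanSpace ℝ (Fin N) →L[ℝ] ℝ := innerSL ℝ b with hDtdef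
  set Dq : EuclideanSpace ℝ (Fin N) →L[ℝ] ℝ := q⁻¹ • innerSL ℝ (vv b y) with hDqdef
  have hDt : HasFDerivAt (fun z => (inner ℝ b z : ℝ)) Dt y := (innerSL ℝ b).hasFDerivAt
  have hDq : HasFDerivAt (fun z => qq b z) Dq y := hasFDerivAt_qq_aux N b hb y hq
  set DA : EuclideanSpace ℝ (Fin N) →L[ℝ] ℝ := Dt + (g / 2) • Dq with hDAdef
  have hDA : HasFDerivAt (fun z => AA g b z) DA y := by
    have : (fun z => AA g b z) = fun z => (inner ℝ b z : ℝ) + g / 2 * qq b z := rfl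
    rw [this]; exact hDt.add (hDq.const_mul (g / 2))
  set DB : EuclideanSpace ℝ (Fin N) →L[ℝ] ℝ := (2 * t + g * q) • Dt + (g * t + 2 * q) • Dq
    with hDBdef
  have hDB : HasFDerivAt (fun z => BB g b z) DB y := by
    have heq : (fun z => BB g b z) =
        fun z => (inner ℝ b z : ℝ) * (inner ℝ b z : ℝ) + g * (inner ℝ b z : ℝ) * qq b z
          + qq b z * qq b z := by
      funext z; unfold BB; ring
    rw [heq]
    have raw := ((hDt.mul hDt).add ((hDt.const_mul g).mul hDq)).add (hDq.mul hDq)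
    refine raw.congr_fderiv (Eq.symm ?_)
    ext w
    simp only [hDBdef, ContinuousLinearMap.add_apply, ContinuousLinearMap.smul_apply,
      smul_eq_mul]
    ring
  have hDs : HasFDerivAt (fun z => Real.sqrt (BB g b z)) ((1 / (2 * s)) • DB) y :=
    hDB.sqrt hB.ne'
  have hDsinv : HasFDerivAt (fun z => (Real.sqrt (BB g b z))⁻¹)
      ((-(s ^ 2)⁻¹) • ((1 / (2 * s)) • DB)) y :=
    (hasDerivAt_inv hs.ne').comp_hasFDerivAt y hDs
  set Du : EuclideanSpace ℝ (Fin N) →L[ℝ] ℝ :=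
    (1 / s) • DA - (A / (2 * s * B)) • DB with hDudef
  have hDu : HasFDerivAt (fun z => AA g b z / Real.sqrt (BB g b z)) Du y := by
    have heq : (fun z => AA g b z / Real.sqrt (BB g b z)) =
        fun z => AA g b z * (Real.sqrt (BB g b z))⁻¹ := by
      funext z; rw [div_eq_mul_inv]
    rw [heq]
    have raw := hDA.mul hDsinv
    refine raw.congr_fderiv (Eq.symm ?_)
    ext w
    simp only [hDudef, ContinuousLinearMap.add_apply, ContinuousLinearMap.sub_apply,
      ContinuousLinearMap.smul_apply, smul_eq_mul]
    rw [← hAdef, ← hBdef, ← hsdef]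
    rw [← hs2]
    field_simp
    ring
  set Dchi : EuclideanSpace ℝ (Fin N) →L[ℝ] ℝ :=
    (-(q / B)) • Dt + (t / B) • Dq with hDchidef
  have hDchi : HasFDerivAt (fun z => chi g b z) Dchi y := by
    have harc : HasFDerivAt (fun z => Real.arccos (AA g b z / Real.sqrt (BB g b z)))
        ((-(1 / Real.sqrt (1 - (A / s) ^ 2))) • Du) y :=
      HasDerivAt.comp_hasFDerivAt (h₂ := Real.arccos)
        (f := fun z => AA g b z / Real.sqrt (BB g b z)) y (Real.hasDerivAt_arccos hunem1 hune1) hDu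
    have heq : (fun z => chi g b z) =
        fun z => 1 / h * Real.arccos (AA g b z / Real.sqrt (BB g b z)) := rfl
    rw [heq]
    have raw := harc.const_mul (1 / h)
    refine raw.congr_fderiv (Eq.symm ?_)
    rw [hsqrtu]
    ext w
    simp only [hDchidef, hDudef, hDAdef, hDBdef, ContinuousLinearMap.sub_apply,
      ContinuousLinearMap.add_apply, ContinuousLinearMap.smul_apply, smul_eq_mul]
    have hqB : h * q / s ≠ 0 := by positivity
    field_simp
    rw [hAtq, hBtq] at *
    linear_combination (2 * q *
      (t * (Dq w) - q * (Dt w))) * hh2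
  have hDexp : HasFDerivAt (fun z => Real.exp (-g * chi g b z))
      (Real.exp (-g * chi g b y) • ((-g) • Dchi)) y :=
    (hDchi.const_mul (-g)).exp
  set e : ℝ := Real.exp (-g * chi g b y) with hedef
  have hKK2 : ∀ z : EuclideanSpace ℝ (Fin N),
      KK g b z ^ 2 / 2 = 2⁻¹ * (BB g b z * Real.exp (-g * chi g b z)) := by
    intro z
    have hBz : (0:ℝ) ≤ BB g b z := by
      have := sq_nonneg ((inner ℝ b z : ℝ) + g / 2 * qq b z)
      have := sq_nonneg (qq b z)
      unfold BB; nlinarith [sq_nonneg (qq b z)]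
    unfold KK JJ
    rw [mul_pow, Real.sq_sqrt hBz, pow_two, ← Real.exp_add]
    have harg : -(g / 2) * chi g b z + -(g / 2) * chi g b z = -g * chi g b z := by ring
    rw [harg]; ring
  have hKe : KK g b y ^ 2 = B * e := by
    have := hKK2 y
    rw [hedef, hBdef]; linarith [hKK2 y]
  have hKB : KK g b y ^ 2 / B = e := by
    rw [hKe]; field_simp
  have hBne : t ^ 2 + g * t * q + q ^ 2 ≠ 0 := by rw [← hBtq]; exact hB.ne'
  have hgne : (1:ℝ) - g ^ 2 / 4 ≠ 0 := hgsq.ne'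
  have hmain : HasFDerivAt (fun z => KK g b z ^ 2 / 2)
      ((KK g b y ^ 2 / BB g b y) • (innerSL ℝ y + (g * qq b y) • innerSL ℝ b)) y := by
    have heq : (fun z => KK g b z ^ 2 / 2)
        = fun z => 2⁻¹ * (BB g b z * Real.exp (-g * chi g b z)) := funext hKK2
    rw [heq]
    have raw := (hDB.mul hDexp).const_mul (2:ℝ)⁻¹
    refine raw.congr_fderiv (Eq.symm ?_)
    rw [← hedef, ← hBdef, ← hqdef]
    ext w
    have hvw : (inner ℝ (vv b y) w : ℝ) = inner ℝ y w - t * inner ℝ b w := by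
      simp only [vv, inner_sub_left, real_inner_smul_left, ← htdef]
    simp only [hDchidef, hDBdef, hDAdef, hDqdef, hDtdef, ContinuousLinearMap.smul_apply,
      ContinuousLinearMap.add_apply, ContinuousLinearMap.sub_apply, innerSL_apply_apply,
      smul_eq_mul, hvw]
    rw [hKB]
    field_simp
    ring
  refine ⟨?_, hmain⟩
  rw [hasGradientAt_iff_hasFDerivAt]
  refine hmain.congr_fderiv (Eq.symm ?_)
  ext w
  simp only [InnerProductSpace.toDual_apply_apply, ContinuousLinearMap.smul_apply,
    ContinuousLinearMap.add_apply, innerSL_apply_apply, smul_eq_mul,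
    inner_add_left, real_inner_smul_left]
  rfl
end
end

section
/- Determinant of the FF^PD_g metric tensor: for every y ∈ ℝ^N with q(y) > 0, the N×N matrix with entries g_{ij}(y) = (K(y)²/B(y))·[ δ_{ij} + (g/B(y))·( q(y)(b(y)+g q(y))·b_i b_j + q(y)(b_i v_j(y) + b_j v_i(y)) − (b(y)/q(y))·v_i(y) v_j(y) ) ] (where b_i and v_i(y) are the coordinates of b and v(y) in the standard orthonormal basis) has determinant (K(y)²/B(y))^N = J(y)^{2N}. -/
noncomputable section

open Real
open scoped RealInnerProductSpace

variable {N : ℕ}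

theorem stmt12 (N : ℕ) (hN : 2 ≤ N) (g : ℝ) (hg1 : -2 < g) (hg2 : g < 2)
    (b : EuclideanSpace ℝ (Fin N)) (hb : ‖b‖ = 1)
    (y : EuclideanSpace ℝ (Fin N)) (hq : 0 < qq b y) :
    (Matrix.of fun i j : Fin N =>
        KK g b y ^ 2 / BB g b y *
          ((if i = j then (1 : ℝ) else 0) + g / BB g b y *
            (qq b y * ((inner ℝ b y : ℝ) + g * qq b y) * b i * b j
              + qq b y * (b i * vv b y j + b j * vv b y i)
              - (inner ℝ b y : ℝ) / qq b y * vv b y i * vv b y j))).det =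
      (KK g b y ^ 2 / BB g b y) ^ N ∧
    (Matrix.of fun i j : Fin N =>
        KK g b y ^ 2 / BB g b y *
          ((if i = j then (1 : ℝ) else 0) + g / BB g b y *
            (qq b y * ((inner ℝ b y : ℝ) + g * qq b y) * b i * b j
              + qq b y * (b i * vv b y j + b j * vv b y i)
              - (inner ℝ b y : ℝ) / qq b y * vv b y i * vv b y j))).det =
      JJ g b y ^ (2 * N) := by
  classical
  have hs : (0:ℝ) < qq b y := hq
  set t : ℝ := (inner ℝ b y : ℝ) with ht
  set s : ℝ := qq b y with hsd
  set w : EuclideanSpace ℝ (Fin N) := vv b y with hw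
  have hBval : BB g b y = t ^ 2 + g * t * s + s ^ 2 := rfl
  have hB : 0 < BB g b y := by
    rw [hBval]
    nlinarith [sq_nonneg (2 * t + g * s), mul_pos hs hs,
      mul_pos (by linarith : (0:ℝ) < 2 - g) (by linarith : (0:ℝ) < g + 2)]
  set Bv : ℝ := BB g b y with hBvd
  have hBne : Bv ≠ 0 := ne_of_gt hB
  -- inner product sums
  have hinner : ∀ x z : EuclideanSpace ℝ (Fin N), (inner ℝ x z : ℝ) = ∑ i, x i * z i := by
    intro x z; simp [PiLp.inner_apply, RCLike.inner_apply, conj_trivial, mul_comm]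
  have hbb : ∑ j, b j * b j = 1 := by
    rw [← hinner, real_inner_self_eq_norm_sq, hb]; norm_num
  have hbwi : (inner ℝ b w : ℝ) = 0 := by
    rw [hw, vv, inner_sub_right, inner_smul_right, real_inner_self_eq_norm_sq, hb]
    ring_nf
  have hbw : ∑ j, b j * w j = 0 := by rw [← hinner]; exact hbwi
  have hwb : ∑ j, w j * b j = 0 := by
    have : ∀ j, w j * b j = b j * w j := fun j => mul_comm _ _
    simp [this, hbw]
  have hww : ∑ j, w j * w j = s ^ 2 := by
    rw [← hinner, real_inner_self_eq_norm_sq]; rfl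
  -- the rank-2 factorization
  set U : Matrix (Fin N) (Fin 2) ℝ := Matrix.of fun i k => if k = 0 then b i else w i with hU
  set V : Matrix (Fin 2) (Fin N) ℝ := Matrix.of fun k j =>
    if k = 0 then g / Bv * (s * (t + g * s) * b j + s * w j)
    else g / Bv * (s * b j - t / s * w j) with hV
  set c : ℝ := KK g b y ^ 2 / Bv with hc
  have hsum : ∀ (a1 a2 : ℝ) (f : Fin N → ℝ),
      (∀ j, f j = a1 * (b j * b j) + a2 * (w j * b j)) → ∑ j, f j = a1 := by
    intro a1 a2 f hf
    simp only [hf]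
    rw [Finset.sum_add_distrib, ← Finset.mul_sum, ← Finset.mul_sum, hbb, hwb]
    ring
  have hsum' : ∀ (a1 a2 : ℝ) (f : Fin N → ℝ),
      (∀ j, f j = a1 * (b j * w j) + a2 * (w j * w j)) → ∑ j, f j = a2 * s ^ 2 := by
    intro a1 a2 f hf
    simp only [hf]
    rw [Finset.sum_add_distrib, ← Finset.mul_sum, ← Finset.mul_sum, hbw, hww]
    ring
  have hM : (Matrix.of fun i j : Fin N =>
        KK g b y ^ 2 / BB g b y *
          ((if i = j then (1 : ℝ) else 0) + g / BB g b y *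
            (s * (t + g * s) * b i * b j
              + s * (b i * w j + b j * w i)
              - t / s * w i * w j))) = c • (1 + U * V) := by
    ext i j
    simp only [Matrix.of_apply, Matrix.smul_apply, Matrix.add_apply, Matrix.one_apply,
      Matrix.mul_apply, Fin.sum_univ_two, hU, hV, hc, ← hBvd, smul_eq_mul,
      if_true, Fin.isValue, one_ne_zero, if_false, reduceIte]
    by_cases hij : i = j <;> simp only [hij, if_true, if_false, reduceIte] <;> ring
  rw [hM]
  have hsne : s ≠ 0 := ne_of_gt hs
  have hdetVU : (1 + V * U).det = 1 := by
    have e00 : (V * U) 0 0 = g / Bv * (s * (t + g * s)) := by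
      have h1 : (V * U) 0 0 = ∑ j, (g / Bv * (s * (t + g * s) * b j + s * w j)) * b j := by
        simp [Matrix.mul_apply, hV, hU]
      rw [h1]
      exact hsum _ (g / Bv * s) _ (fun j => by ring)
    have e01 : (V * U) 0 1 = g / Bv * s * s ^ 2 := by
      have h1 : (V * U) 0 1 = ∑ j, (g / Bv * (s * (t + g * s) * b j + s * w j)) * w j := by
        simp [Matrix.mul_apply, hV, hU]
      rw [h1]
      exact hsum' (g / Bv * (s * (t + g * s))) _ _ (fun j => by ring)
    have e10 : (V * U) 1 0 = g / Bv * s := by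
      have h1 : (V * U) 1 0 = ∑ j, (g / Bv * (s * b j - t / s * w j)) * b j := by
        simp [Matrix.mul_apply, hV, hU]
      rw [h1]
      exact hsum _ (-(g / Bv * (t / s))) _ (fun j => by ring)
    have e11 : (V * U) 1 1 = -(g / Bv * (t / s)) * s ^ 2 := by
      have h1 : (V * U) 1 1 = ∑ j, (g / Bv * (s * b j - t / s * w j)) * w j := by
        simp [Matrix.mul_apply, hV, hU]
      rw [h1]
      exact hsum' (g / Bv * s) _ _ (fun j => by ring)
    rw [Matrix.det_fin_two]
    simp only [Matrix.add_apply, Matrix.one_apply, e00, e01, e10, e11,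
      if_true, one_ne_zero, if_false, reduceIte, Fin.isValue]
    norm_num
    field_simp
    linear_combination (g ^ 2 * s ^ 2) * hBval
  have hdetUV : (1 + U * V).det = 1 := by
    rw [Matrix.det_one_add_mul_comm, hdetVU]
  have hdet : (c • (1 + U * V)).det = c ^ N := by
    rw [Matrix.det_smul, hdetUV, Fintype.card_fin, mul_one]
  have hKB : c = JJ g b y ^ 2 := by
    rw [hc, KK, mul_pow, sq_sqrt hB.le]
    exact mul_div_cancel_left₀ _ hBne
  constructor
  · rw [hdet, hc, hBvd]
  · rw [hdet, hKB, ← pow_mul, Nat.mul_comm]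
end
end

section
/- Explicit inverse of the FF^PD_g metric tensor: for every y ∈ ℝ^N with q(y) > 0, the matrix with entries g^{jk}(y) = (B(y)/K(y)²)·[ δ^{jk} + (g/q(y))·( b(y)·b_j b_k − b_j y_k − b_k y_j ) + (g/(B(y)q(y)))·(b(y)+g q(y))·y_j y_k ] is the two-sided matrix inverse of the matrix with entries g_{ij}(y) = (K(y)²/B(y))·[ δ_{ij} + (g/B(y))·( q(y)(b(y)+g q(y))·b_i b_j + q(y)(b_i v_j(y)+b_j v_i(y)) − (b(y)/q(y))·v_i(y)v_j(y) ) ], i.e. g_{ij}(y)·g^{jk}(y) = δ_i^k. -/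
noncomputable section

open Real
open scoped RealInnerProductSpace

variable {N : ℕ}

open Matrix in
private lemma wmul {n : ℕ} (u v w z : Fin n → ℝ) :
    Matrix.vecMulVec u v * Matrix.vecMulVec w z = (v ⬝ᵥ w) • Matrix.vecMulVec u z := by
  ext i k
  simp only [Matrix.mul_apply, Matrix.vecMulVec_apply, Matrix.smul_apply, dotProduct,
    smul_eq_mul, Finset.sum_mul]
  exact Finset.sum_congr rfl fun j _ => by ring

set_option maxHeartbeats 2000000 in
theorem stmt13 (N : ℕ) (hN : 2 ≤ N) (g : ℝ) (hg1 : -2 < g) (hg2 : g < 2)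
    (b : EuclideanSpace ℝ (Fin N)) (hb : ‖b‖ = 1)
    (y : EuclideanSpace ℝ (Fin N)) (hq : 0 < qq b y) :
    (Matrix.of fun i j : Fin N =>
        KK g b y ^ 2 / BB g b y *
          ((if i = j then (1 : ℝ) else 0) + g / BB g b y *
            (qq b y * ((inner ℝ b y : ℝ) + g * qq b y) * b i * b j
              + qq b y * (b i * vv b y j + b j * vv b y i)
              - (inner ℝ b y : ℝ) / qq b y * vv b y i * vv b y j))) *
      (Matrix.of fun j k : Fin N =>
        BB g b y / KK g b y ^ 2 *
          ((if j = k then (1 : ℝ) else 0)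
            + g / qq b y * ((inner ℝ b y : ℝ) * b j * b k - b j * y k - b k * y j)
            + g / (BB g b y * qq b y) * ((inner ℝ b y : ℝ) + g * qq b y) * y j * y k)) = 1 ∧
    (Matrix.of fun j k : Fin N =>
        BB g b y / KK g b y ^ 2 *
          ((if j = k then (1 : ℝ) else 0)
            + g / qq b y * ((inner ℝ b y : ℝ) * b j * b k - b j * y k - b k * y j)
            + g / (BB g b y * qq b y) * ((inner ℝ b y : ℝ) + g * qq b y) * y j * y k)) *
      (Matrix.of fun i j : Fin N =>
        KK g b y ^ 2 / BB g b y *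
          ((if i = j then (1 : ℝ) else 0) + g / BB g b y *
            (qq b y * ((inner ℝ b y : ℝ) + g * qq b y) * b i * b j
              + qq b y * (b i * vv b y j + b j * vv b y i)
              - (inner ℝ b y : ℝ) / qq b y * vv b y i * vv b y j))) = 1 := by
  classical
  have hq' : qq b y ≠ 0 := ne_of_gt hq
  set β : ℝ := (inner ℝ b y : ℝ) with hβ
  set q : ℝ := qq b y with hqdef
  set B : ℝ := BB g b y with hBd
  set K : ℝ := KK g b y with hKd
  have hBdef : B = β ^ 2 + g * β * q + q ^ 2 := by rw [hBd, BB]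
  have hBpos : 0 < B := by
    rw [hBdef]
    nlinarith [sq_nonneg (2 * β + g * q),
      mul_pos (show (0:ℝ) < (2 - g) * (2 + g) by nlinarith) (mul_pos hq hq)]
  have hB0 : B ≠ 0 := ne_of_gt hBpos
  have hK2 : K ^ 2 = B * JJ g b y ^ 2 := by
    rw [hKd, KK, mul_pow, Real.sq_sqrt hBpos.le, hBd]
  have hK2pos : 0 < K ^ 2 := by
    rw [hK2]
    exact mul_pos hBpos (pow_pos (Real.exp_pos _) 2)
  have hK20 : K ^ 2 ≠ 0 := ne_of_gt hK2pos
  have hK0 : K ≠ 0 := fun h => hK20 (by rw [h]; ring)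
  -- dot product facts
  have hdp : ∀ u w : EuclideanSpace ℝ (Fin N), dotProduct (u : Fin N → ℝ) w = (inner ℝ u w : ℝ) := by
    intro u w
    rw [PiLp.inner_apply]
    simp [dotProduct, mul_comm]
  have hbb : dotProduct (b : Fin N → ℝ) b = 1 := by
    rw [hdp, real_inner_self_eq_norm_sq, hb]; ring
  have hibv : (inner ℝ b (vv b y) : ℝ) = 0 := by
    simp only [vv, inner_sub_right, real_inner_smul_right, real_inner_self_eq_norm_sq, hb]
    ring
  have hbv : dotProduct (b : Fin N → ℝ) (vv b y) = 0 := by rw [hdp, hibv]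
  have hvb : dotProduct (vv b y : Fin N → ℝ) b = 0 := by
    rw [dotProduct_comm]; exact hbv
  have hvv : dotProduct (vv b y : Fin N → ℝ) (vv b y) = q ^ 2 := by
    rw [hdp, real_inner_self_eq_norm_sq]; rfl
  have hycoord : ∀ i, y i = vv b y i + β * b i := by
    intro i; simp [vv, hβ]
  -- abbreviations for outer products
  set Wbb := Matrix.vecMulVec (b : Fin N → ℝ) (b : Fin N → ℝ) with hWbb
  set Wbv := Matrix.vecMulVec (b : Fin N → ℝ) (vv b y : Fin N → ℝ) with hWbv
  set Wvb := Matrix.vecMulVec (vv b y : Fin N → ℝ) (b : Fin N → ℝ) with hWvb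
  set Wvv := Matrix.vecMulVec (vv b y : Fin N → ℝ) (vv b y : Fin N → ℝ) with hWvv
  set x1 : ℝ := g / B * (q * (β + g * q)) with hx1
  set x2 : ℝ := g / B * q with hx2
  set x3 : ℝ := -(g / B * (β / q)) with hx3
  set z1 : ℝ := -(g * β * q / B) with hz1
  set z2 : ℝ := -(g * q / B) with hz2
  set z4 : ℝ := g * (β + g * q) / (B * q) with hz4
  have hM1 : (Matrix.of fun i j : Fin N =>
        K ^ 2 / B *
          ((if i = j then (1 : ℝ) else 0) + g / B *
            (q * (β + g * q) * b i * b j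
              + q * (b i * vv b y j + b j * vv b y i)
              - β / q * vv b y i * vv b y j))) =
      (K ^ 2 / B) • (1 + x1 • Wbb + x2 • Wbv + x2 • Wvb + x3 • Wvv) := by
    ext i j
    simp only [Matrix.of_apply, Matrix.smul_apply, Matrix.add_apply, Matrix.one_apply,
      hWbb, hWbv, hWvb, hWvv, Matrix.vecMulVec_apply, smul_eq_mul, hx1, hx2, hx3]
    ring
  have hM2 : (Matrix.of fun j k : Fin N =>
        B / K ^ 2 *
          ((if j = k then (1 : ℝ) else 0)
            + g / q * (β * b j * b k - b j * y k - b k * y j)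
            + g / (B * q) * (β + g * q) * y j * y k)) =
      (B / K ^ 2) • (1 + z1 • Wbb + z2 • Wbv + z2 • Wvb + z4 • Wvv) := by
    ext j k
    simp only [Matrix.of_apply, Matrix.smul_apply, Matrix.add_apply, Matrix.one_apply,
      hWbb, hWbv, hWvb, hWvv, Matrix.vecMulVec_apply, smul_eq_mul, hz1, hz2, hz4,
      hycoord j, hycoord k]
    have hB0' : β ^ 2 + g * β * q + q ^ 2 ≠ 0 := hBdef ▸ hB0
    rw [hBdef]
    set δ : ℝ := (if j = k then (1:ℝ) else 0) with hδ
    have hB0'' : β * (β + g * q) + q ^ 2 ≠ 0 := fun h => hB0' (by linear_combination h)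
    field_simp
    ring
  have hc : K ^ 2 / B * (B / K ^ 2) = 1 := by field_simp
  have hc' : B / K ^ 2 * (K ^ 2 / B) = 1 := by field_simp
  have hP1 : (1 + x1 • Wbb + x2 • Wbv + x2 • Wvb + x3 • Wvv) *
      (1 + z1 • Wbb + z2 • Wbv + z2 • Wvb + z4 • Wvv) = 1 := by
    simp only [add_mul, mul_add, one_mul, mul_one, Matrix.smul_mul, Matrix.mul_smul,
      hWbb, hWbv, hWvb, hWvv, wmul, hbb, hbv, hvb, hvv, one_smul, zero_smul, smul_zero,
      smul_smul, add_zero, zero_add]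
    have hB0' : β ^ 2 + g * β * q + q ^ 2 ≠ 0 := hBdef ▸ hB0
    match_scalars
    all_goals simp only [hx1, hx2, hx3, hz1, hz2, hz4, hBdef]
    all_goals field_simp
    all_goals ring
  have hP2 : (1 + z1 • Wbb + z2 • Wbv + z2 • Wvb + z4 • Wvv) *
      (1 + x1 • Wbb + x2 • Wbv + x2 • Wvb + x3 • Wvv) = 1 := by
    simp only [add_mul, mul_add, one_mul, mul_one, Matrix.smul_mul, Matrix.mul_smul,
      hWbb, hWbv, hWvb, hWvv, wmul, hbb, hbv, hvb, hvv, one_smul, zero_smul, smul_zero,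
      smul_smul, add_zero, zero_add]
    have hB0' : β ^ 2 + g * β * q + q ^ 2 ≠ 0 := hBdef ▸ hB0
    match_scalars
    all_goals simp only [hx1, hx2, hx3, hz1, hz2, hz4, hBdef]
    all_goals field_simp
    all_goals ring
  constructor
  · rw [hM1, hM2, Matrix.smul_mul, Matrix.mul_smul, smul_smul, hc, hP1, one_smul]
  · rw [hM1, hM2, Matrix.smul_mul, Matrix.mul_smul, smul_smul, hc', hP2, one_smul]
end
end

section
/- Explicit integration of the azimuthal geodesic equation on the FF^PD_g indicatrix (Theorem 2.8, χ-part): let 0 < h ≤ 1, let C̃, s̃ ∈ ℝ with 0 < h·|C̃| ≤ 1, and define χ(s) = (1/h)·arccos( √(1 − h²C̃²)·cos(h(s − s̃)) ). Then sin(hχ(s)) = √( 1 − (1 − h²C̃²)·cos²(h(s − s̃)) ), and at every s where χ is differentiable (all s when h|C̃| < 1 and C̃ ≠ 0), χ'(s)² = 1 − h²C̃²/sin²(hχ(s)). -/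
theorem stmt17 (h C s₀ : ℝ) (hh0 : 0 < h) (hh1 : h ≤ 1)
    (hC0 : 0 < h * |C|) (hC1 : h * |C| ≤ 1) :
    (∀ s : ℝ,
      Real.sin (h * (1 / h * Real.arccos
          (Real.sqrt (1 - h ^ 2 * C ^ 2) * Real.cos (h * (s - s₀))))) =
        Real.sqrt (1 - (1 - h ^ 2 * C ^ 2) * Real.cos (h * (s - s₀)) ^ 2)) ∧
    (∀ s : ℝ,
      DifferentiableAt ℝ
          (fun s => 1 / h * Real.arccos
            (Real.sqrt (1 - h ^ 2 * C ^ 2) * Real.cos (h * (s - s₀)))) s →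
        (deriv (fun s => 1 / h * Real.arccos
            (Real.sqrt (1 - h ^ 2 * C ^ 2) * Real.cos (h * (s - s₀)))) s) ^ 2 =
          1 - h ^ 2 * C ^ 2 /
            Real.sin (h * (1 / h * Real.arccos
              (Real.sqrt (1 - h ^ 2 * C ^ 2) * Real.cos (h * (s - s₀))))) ^ 2) := by
  have hne : h ≠ 0 := ne_of_gt hh0
  have hsq : (0:ℝ) < (h * |C|) ^ 2 := pow_pos hC0 2
  have hsq' : (h * |C|) ^ 2 ≤ 1 := by nlinarith
  rw [mul_pow, sq_abs] at hsq hsq'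
  set A := Real.sqrt (1 - h ^ 2 * C ^ 2) with hAdef
  have hA2 : A ^ 2 = 1 - h ^ 2 * C ^ 2 := Real.sq_sqrt (by linarith)
  have hA0 : 0 ≤ A := Real.sqrt_nonneg _
  have hA1 : A < 1 := by nlinarith
  have hx : ∀ s : ℝ, |A * Real.cos (h * (s - s₀))| < 1 := by
    intro s
    rw [abs_mul, abs_of_nonneg hA0]
    calc A * |Real.cos (h * (s - s₀))| ≤ A * 1 :=
          mul_le_mul_of_nonneg_left (Real.abs_cos_le_one _) hA0
      _ < 1 := by linarith
  have hpos : ∀ s : ℝ, 0 < 1 - (A * Real.cos (h * (s - s₀))) ^ 2 := by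
    intro s
    have := hx s
    nlinarith [abs_nonneg (A * Real.cos (h * (s - s₀))), sq_abs (A * Real.cos (h * (s - s₀)))]
  have hcancel : ∀ y : ℝ, h * (1 / h * y) = y := by intro y; field_simp
  have hsin : ∀ s : ℝ,
      Real.sin (h * (1 / h * Real.arccos (A * Real.cos (h * (s - s₀))))) =
        Real.sqrt (1 - (1 - h ^ 2 * C ^ 2) * Real.cos (h * (s - s₀)) ^ 2) := by
    intro s
    rw [hcancel, Real.sin_arccos]
    congr 1
    rw [mul_pow, hA2]
  constructor
  · exact hsin
  · intro s _
    set θ := h * (s - s₀) with hθ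
    set x := A * Real.cos θ with hxdef
    have hx1 : x ≠ 1 := by have := hx s; rw [← hxdef] at this; intro hc; rw [hc] at this; simp at this
    have hx1' : x ≠ -1 := by have := hx s; rw [← hxdef] at this; intro hc; rw [hc] at this; simp at this
    have hp : 0 < 1 - x ^ 2 := hpos s
    set S := Real.sqrt (1 - x ^ 2) with hSdef
    have hS0 : 0 < S := Real.sqrt_pos.mpr hp
    have hS2 : S ^ 2 = 1 - x ^ 2 := Real.sq_sqrt hp.le
    have h1 : HasDerivAt (fun s : ℝ => h * (s - s₀)) h s := by
      simpa using ((hasDerivAt_id s).sub_const s₀).const_mul h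
    have h2 : HasDerivAt (fun s : ℝ => A * Real.cos (h * (s - s₀)))
        (A * (-Real.sin θ * h)) s := by
      have := ((Real.hasDerivAt_cos (h * (s - s₀))).comp s h1).const_mul A
      simpa [hθ, mul_comm, mul_assoc] using this
    have h3 : HasDerivAt (fun s : ℝ => Real.arccos (A * Real.cos (h * (s - s₀))))
        (-(1 / S) * (A * (-Real.sin θ * h))) s := by
      have := (Real.hasDerivAt_arccos hx1' hx1).comp s h2
      simpa [hSdef, hxdef, Function.comp_def] using this
    have h4 : HasDerivAt (fun s : ℝ => 1 / h * Real.arccos (A * Real.cos (h * (s - s₀))))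
        (1 / h * (-(1 / S) * (A * (-Real.sin θ * h)))) s := h3.const_mul (1 / h)
    rw [h4.deriv, hsin s]
    have hsin2 : Real.sqrt (1 - (1 - h ^ 2 * C ^ 2) * Real.cos θ ^ 2) = S := by
      rw [hSdef, hxdef]; congr 1; rw [mul_pow, hA2]
    rw [hsin2]
    have hpy : Real.sin θ ^ 2 + Real.cos θ ^ 2 = 1 := Real.sin_sq_add_cos_sq θ
    rw [hxdef] at hS2
    field_simp
    linear_combination A ^ 2 * hpy - hS2 +
      hA2
end

section
/- Explicit integration of the polar geodesic equation on the FF^PD_g indicatrix (Theorem 2.8, φ-part): let 0 < h ≤ 1, C̃ ≠ 0 with h·|C̃| ≤ 1, and s̃ ∈ ℝ. Define on the interval s − s̃ ∈ (−π/(2h), π/(2h)) the function φ(s) = arctan( tan(h(s − s̃)) / (hC̃) ). Then φ is differentiable there and φ'(s) = h²C̃ / ( 1 − (1 − h²C̃²)·cos²(h(s − s̃)) ); equivalently, with χ(s) = (1/h)·arccos(√(1 − h²C̃²)·cos(h(s − s̃))), one has (1/h²)·sin²(hχ(s))·φ'(s) = C̃. -/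
theorem stmt18 (h C s₀ : ℝ) (hh0 : 0 < h) (hh1 : h ≤ 1)
    (hC : C ≠ 0) (hC1 : h * |C| ≤ 1) :
    ∀ s : ℝ, s - s₀ ∈ Set.Ioo (-(Real.pi / (2 * h))) (Real.pi / (2 * h)) →
      DifferentiableAt ℝ (fun s => Real.arctan (Real.tan (h * (s - s₀)) / (h * C))) s ∧
      deriv (fun s => Real.arctan (Real.tan (h * (s - s₀)) / (h * C))) s =
        h ^ 2 * C / (1 - (1 - h ^ 2 * C ^ 2) * Real.cos (h * (s - s₀)) ^ 2) ∧
      1 / h ^ 2 *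
          Real.sin (h * (1 / h * Real.arccos
            (Real.sqrt (1 - h ^ 2 * C ^ 2) * Real.cos (h * (s - s₀))))) ^ 2 *
          deriv (fun s => Real.arctan (Real.tan (h * (s - s₀)) / (h * C))) s = C := by
  intro s hs
  obtain ⟨hs1, hs2⟩ := hs
  set θ := h * (s - s₀) with hθ
  have hπ : Real.pi / (2 * h) = (Real.pi / 2) / h := by ring
  have hθ2 : θ < Real.pi / 2 := by
    rw [hθ, mul_comm]
    exact (lt_div_iff₀ hh0).mp (hπ ▸ hs2)
  have hθ1 : -(Real.pi / 2) < θ := by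
    rw [hθ, mul_comm]
    have := hπ ▸ hs1
    rw [← neg_div] at this
    exact (div_lt_iff₀ hh0).mp this
  have hcos : 0 < Real.cos θ := Real.cos_pos_of_mem_Ioo ⟨hθ1, hθ2⟩
  have hcne : Real.cos θ ≠ 0 := hcos.ne'
  have hhC : h * C ≠ 0 := mul_ne_zero hh0.ne' hC
  have h1 : HasDerivAt (fun s => h * (s - s₀)) h s := by
    simpa using ((hasDerivAt_id s).sub_const s₀).const_mul h
  have h2 : HasDerivAt (fun s => Real.tan (h * (s - s₀))) (1 / Real.cos θ ^ 2 * h) s :=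
    by have := (Real.hasDerivAt_tan hcne).comp s h1; exact this
  have h3 : HasDerivAt (fun s => Real.tan (h * (s - s₀)) / (h * C))
      ((1 / Real.cos θ ^ 2 * h) / (h * C)) s := h2.div_const _
  have h4 : HasDerivAt (fun s => Real.arctan (Real.tan (h * (s - s₀)) / (h * C)))
      (1 / (1 + (Real.tan θ / (h * C)) ^ 2) * ((1 / Real.cos θ ^ 2 * h) / (h * C))) s :=
    (Real.hasDerivAt_arctan _).comp s h3
  have hsc : Real.sin θ ^ 2 = 1 - Real.cos θ ^ 2 := by
    nlinarith [Real.sin_sq_add_cos_sq θ]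
  have hc1 : Real.cos θ ^ 2 ≤ 1 := Real.cos_sq_le_one θ
  have hhc2 : h ^ 2 * C ^ 2 ≤ 1 := by
    have e : h ^ 2 * C ^ 2 = (h * |C|) ^ 2 := by rw [mul_pow, sq_abs]
    nlinarith [mul_nonneg hh0.le (abs_nonneg C)]
  have hhc0 : 0 < h ^ 2 * C ^ 2 := by positivity
  have hD : (0:ℝ) < 1 - (1 - h ^ 2 * C ^ 2) * Real.cos θ ^ 2 := by
    nlinarith [sq_nonneg (Real.cos θ)]
  have hden : (0:ℝ) < 1 + (Real.tan θ / (h * C)) ^ 2 := by positivity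
  have key : 1 / (1 + (Real.tan θ / (h * C)) ^ 2) * ((1 / Real.cos θ ^ 2 * h) / (h * C))
      = h ^ 2 * C / (1 - (1 - h ^ 2 * C ^ 2) * Real.cos θ ^ 2) := by
    rw [Real.tan_eq_sin_div_cos]
    field_simp
    rw [eq_div_iff (by have : (1:ℝ) - Real.cos θ ^ 2 * (1 - h ^ 2 * C ^ 2) = 1 - (1 - h ^ 2 * C ^ 2) * Real.cos θ ^ 2 := by ring
                       rw [this]; exact hD.ne')]
    linear_combination (-1) * hsc
  have hderiv : deriv (fun s => Real.arctan (Real.tan (h * (s - s₀)) / (h * C))) s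
      = h ^ 2 * C / (1 - (1 - h ^ 2 * C ^ 2) * Real.cos θ ^ 2) := by
    rw [h4.deriv, key]
  refine ⟨h4.differentiableAt, hderiv, ?_⟩
  rw [hderiv]
  have hmul : h * (1 / h * Real.arccos (Real.sqrt (1 - h ^ 2 * C ^ 2) * Real.cos θ))
      = Real.arccos (Real.sqrt (1 - h ^ 2 * C ^ 2) * Real.cos θ) := by
    field_simp
  rw [hmul, Real.sin_arccos]
  have hA : (Real.sqrt (1 - h ^ 2 * C ^ 2) * Real.cos θ) ^ 2
      = (1 - h ^ 2 * C ^ 2) * Real.cos θ ^ 2 := by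
    rw [mul_pow, Real.sq_sqrt (by linarith)]
  have hnn : 0 ≤ 1 - (Real.sqrt (1 - h ^ 2 * C ^ 2) * Real.cos θ) ^ 2 := by
    rw [hA]; linarith
  rw [Real.sq_sqrt hnn, hA]
  field_simp
end
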